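/- For a BMS channel W and symbols y_i, y_j with LR(y_i), LR(y_j) ≥ 1, the degrading merge of y_i with y_j yields capacity at least as large as the merge of y_i with the conjugate ȳ_j: I(y_i, y_j) ≥ I(y_i, ȳ_j). -/
import Mathlib


open scoped BigOperators

/-- `P : A → B → ℝ` is a channel: nonnegative entries, rows sum to 1. -/
def IsChannel {A B : Type*} [Fintype B] (P : A → B → ℝ) : Prop :=
  (∀ a b, 0 ≤ P a b) ∧ ∀ a, ∑ b, P a b = 1

/-- Symmetric capacity of a binary-input channel. -/
noncomputable def Icap {Z : Type*} [Fintype Z] (Q : Bool → Z → ℝ) : ℝ :=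
  ∑ z, ∑ x : Bool,
    (1 / 2) * Q x z * Real.logb 2 (Q x z / ((Q false z + Q true z) / 2))

/-- The degrading merge of symbols `w₁` and `w₂` (and their conjugates) of `W`. -/
noncomputable def mergeCh {Y : Type*} [DecidableEq Y]
    (W : Bool → Y → ℝ) (c : Y → Y) (w₁ w₂ : Y) : Bool → (Y ⊕ Bool) → ℝ :=
  fun x s =>
    Sum.elim
      (fun y => if y = w₁ ∨ y = c w₁ ∨ y = w₂ ∨ y = c w₂ then 0 else W x y)
      (fun b : Bool => if b then W x (c w₁) + W x (c w₂) else W x w₁ + W x w₂) s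


lemma F_convex (s : ℝ) :
    ConvexOn ℝ (Set.Icc 0 s) (fun x => x * Real.log x + (s - x) * Real.log (s - x)) := by
  apply ConvexOn.add
  · exact Real.convexOn_mul_log.subset (fun x hx => hx.1) (convex_Icc _ _)
  · constructor
    · exact convex_Icc _ _
    · intro x hx y hy p q hp hq hpq
      have hx' : s - x ∈ Set.Ici (0:ℝ) := by simp [hx.2]
      have hy' : s - y ∈ Set.Ici (0:ℝ) := by simp [hy.2]
      have h := Real.convexOn_mul_log.2 hx' hy' hp hq hpq
      have hrw : s - (p * x + q * y) = p * (s - x) + q * (s - y) := by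
        linear_combination s * hpq.symm
      simp only [smul_eq_mul]
      rw [hrw]
      exact h

lemma F_max (u v u' : ℝ) (hv : 0 ≤ v) (h1 : v ≤ u') (h2 : u' ≤ u) :
    u' * Real.log u' + (u + v - u') * Real.log (u + v - u') ≤
      u * Real.log u + v * Real.log v := by
  have hvu : v ≤ u := le_trans h1 h2
  have hmem : u' ∈ segment ℝ v u := by
    rw [segment_eq_Icc hvu]; exact ⟨h1, h2⟩
  obtain ⟨p, q, hp, hq, hpq, rfl⟩ := hmem
  have hvIcc : v ∈ Set.Icc (0:ℝ) (u + v) := ⟨hv, by linarith⟩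
  have huIcc : u ∈ Set.Icc (0:ℝ) (u + v) := ⟨le_trans hv hvu, by linarith⟩
  have h := (F_convex (u + v)).2 hvIcc huIcc hp hq hpq
  simp only [smul_eq_mul] at h ⊢
  have e1 : u + v - v = u := by ring
  have e2 : u + v - u = v := by ring
  rw [e1, e2] at h
  calc _ ≤ p * (v * Real.log v + u * Real.log u) + q * (u * Real.log u + v * Real.log v) := h
    _ = u * Real.log u + v * Real.log v := by linear_combination (u * Real.log u + v * Real.log v) * hpq

lemma mul_log_div (x m : ℝ) (hx : 0 ≤ x) (hm : 0 < m) :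
    x * Real.log (x / m) = x * Real.log x - x * Real.log m := by
  rcases eq_or_lt_of_le hx with h | h
  · simp [← h]
  · rw [Real.log_div (ne_of_gt h) (ne_of_gt hm)]; ring

lemma key_log (a a' b b' : ℝ) (ha0 : 0 ≤ a') (hb0 : 0 ≤ b') (ha : a' ≤ a) (hb : b' ≤ b)
    (m : ℝ) (hm : m = ((a + b) + (a' + b')) / 2) :
    (a + b') * Real.log ((a + b') / m) + (a' + b) * Real.log ((a' + b) / m) ≤
      (a + b) * Real.log ((a + b) / m) + (a' + b') * Real.log ((a' + b') / m) := by
  rcases eq_or_lt_of_le (by linarith : (0:ℝ) ≤ ((a+b)+(a'+b'))/2 ) with h0 | h0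
  · have haz : a = 0 := by linarith
    have ha'z : a' = 0 := by linarith
    have hbz : b = 0 := by linarith
    have hb'z : b' = 0 := by linarith
    simp [haz, ha'z, hbz, hb'z]
  · have hm0 : 0 < m := hm ▸ h0
    rw [mul_log_div _ _ (by linarith) hm0, mul_log_div _ _ (by linarith) hm0,
        mul_log_div _ _ (by linarith) hm0, mul_log_div _ _ (by linarith) hm0]
    have key := F_max (a + b) (a' + b') (a + b') (by linarith) (by linarith) (by linarith)
    have e : (a + b) + (a' + b') - (a + b') = a' + b := by ring
    rw [e] at key
    linarith

lemma key_logb (a a' b b' : ℝ) (ha0 : 0 ≤ a') (hb0 : 0 ≤ b') (ha : a' ≤ a) (hb : b' ≤ b)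
    (m : ℝ) (hm : m = ((a + b) + (a' + b')) / 2) :
    (a + b') * Real.logb 2 ((a + b') / m) + (a' + b) * Real.logb 2 ((a' + b) / m) ≤
      (a + b) * Real.logb 2 ((a + b) / m) + (a' + b') * Real.logb 2 ((a' + b') / m) := by
  simp only [Real.logb, ← mul_div_assoc, ← add_div]
  exact div_le_div_of_nonneg_right (key_log a a' b b' ha0 hb0 ha hb m hm) (Real.log_nonneg (by norm_num))

/-- merging `yᵢ` with `yⱼ` (both of LR ≥ 1) is at least as good
in capacity as merging `yᵢ` with the conjugate `ȳⱼ`. -/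
theorem merge_with_symbol_beats_conjugate {Y : Type*} [Fintype Y] [DecidableEq Y]
    (W : Bool → Y → ℝ) (hW : IsChannel W)
    (c : Y → Y) (hc : Function.Involutive c) (hnofix : ∀ y, c y ≠ y)
    (hsym : ∀ y, W true y = W false (c y))
    (yi yj : Y) (hdist : [yi, c yi, yj, c yj].Nodup)
    (hLRi : W false (c yi) ≤ W false yi)
    (hLRj : W false (c yj) ≤ W false yj) :
    Icap (mergeCh W c yi yj) ≥ Icap (mergeCh W c yi (c yj)) := by
  obtain ⟨hW0, -⟩ := hW
  have hcc : ∀ y, c (c y) = y := hc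
  have hinl : ∀ (x : Bool) (y : Y),
      mergeCh W c yi (c yj) x (Sum.inl y) = mergeCh W c yi yj x (Sum.inl y) := by
    intro x y
    simp only [mergeCh, Sum.elim_inl, hcc]
    split_ifs with h1 h2 <;> tauto
  rw [ge_iff_le, Icap, Icap, Fintype.sum_sum_type, Fintype.sum_sum_type]
  apply add_le_add
  · apply le_of_eq
    refine Finset.sum_congr rfl fun y _ => Finset.sum_congr rfl fun x _ => ?_
    simp only [hinl]
  · have hkey := key_logb (W false yi) (W false (c yi)) (W false yj) (W false (c yj))
      (hW0 _ _) (hW0 _ _) hLRi hLRj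
      (((W false yi + W false yj) + (W false (c yi) + W false (c yj))) / 2) rfl
    simp [Fintype.sum_bool, mergeCh, hsym, hcc]
    refine le_trans (le_of_eq ?_) (le_trans hkey (le_of_eq ?_)) <;> ring_nf
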